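/- arXiv:2103.12302 — 2 statements merged into one kernel-verified Lean document; each statement's English description precedes it below -/
import Mathlib

section
/- Let $n \geq 1$ and let $I_i = [a_i, b_i]$, $1 \leq i \leq n$, be closed real intervals ordered so that $a_1 \leq b_1 \leq a_2 \leq b_2 \leq \cdots \leq a_n \leq b_n$. Then for any collection of nonnegative real numbers $\{\alpha_{ij}\}_{1 \leq i < j \leq n}$, there exists an integer $K_0$ with $1 \leq K_0 < n$ (when $n \geq 2$; the inequality is trivial for $n = 1$) such that $\sum_{i<j} \alpha_{ij}(a_j - b_i) \geq \left(b_n - a_1 - \sum_{i=1}^n (b_i - a_i)\right) \sum_{1 \leq i \leq K_0 < j \leq n} \alpha_{ij}$. -/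
open Finset

private lemma tele_aux (a b : ℕ → ℝ) :
    ∀ m, 1 ≤ m → ∑ k ∈ Icc 1 (m-1), (a (k+1) - b k)
      = b m - a 1 - ∑ i ∈ Icc 1 m, (b i - a i) := by
  intro m hm
  induction m, hm using Nat.le_induction with
  | base => simp
  | succ m hm ih =>
    obtain ⟨m', rfl⟩ : ∃ m', m = m' + 1 := ⟨m-1, by omega⟩
    have h1 : ∑ i ∈ Icc 1 (m'+1+1), (b i - a i)
        = (∑ i ∈ Icc 1 (m'+1), (b i - a i)) + (b (m'+1+1) - a (m'+1+1)) :=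
      Finset.sum_Icc_succ_top (by omega) _
    have h2 : (m'+1+1) - 1 = m' + 1 := rfl
    have h3 : ∑ k ∈ Icc 1 (m'+1), (a (k+1) - b k)
        = (∑ k ∈ Icc 1 m', (a (k+1) - b k)) + (a (m'+1+1) - b (m'+1)) :=
      Finset.sum_Icc_succ_top (by omega) _
    have h4 : (m'+1) - 1 = m' := rfl
    rw [show m' + 1 - 1 = m' from rfl] at ih
    rw [h2, h3, h4] at *
    rw [ih, h1]; ring

private lemma key_aux (n : ℕ) (a b : ℕ → ℝ)
    (hab : ∀ i, 1 ≤ i → i ≤ n → a i ≤ b i)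
    (hba : ∀ i, 1 ≤ i → i < n → b i ≤ a (i + 1)) :
    ∀ i j, 1 ≤ i → i < j → j ≤ n →
      ∑ k ∈ Icc i (j-1), (a (k+1) - b k) ≤ a j - b i := by
  intro i j hi hij
  induction j, hij using Nat.le_induction with
  | base =>
    intro h
    rw [show i + 1 - 1 = i from rfl, Finset.Icc_self, Finset.sum_singleton]
  | succ j hj ih =>
    intro hjn
    obtain ⟨j', rfl⟩ : ∃ j', j = j' + 1 := ⟨j-1, by omega⟩
    have hjn' : j' + 1 ≤ n := by omega
    have h3 : ∑ k ∈ Icc i (j'+1), (a (k+1) - b k)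
        = (∑ k ∈ Icc i j', (a (k+1) - b k)) + (a (j'+1+1) - b (j'+1)) :=
      Finset.sum_Icc_succ_top (by omega) _
    have h4 : (j'+1+1) - 1 = j' + 1 := rfl
    have h5 : a (j'+1) ≤ b (j'+1) := hab (j'+1) (by omega) hjn'
    have h6 := ih hjn'
    rw [show (j'+1) - 1 = j' from rfl] at h6
    rw [h4, h3]
    linarith

/-- Interval gap lemma: for ordered closed intervals `[a i, b i]`, `1 ≤ i ≤ n`, and
nonnegative weights `α i j` for `i < j`, there is a cut `K₀` with `1 ≤ K₀ < n` such that
`∑_{i<j} α i j (a j - b i) ≥ (b n - a 1 - ∑ (b i - a i)) ∑_{i ≤ K₀ < j} α i j`. -/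
theorem interval_gap_lemma (n : ℕ) (hn : 2 ≤ n) (a b : ℕ → ℝ) (α : ℕ → ℕ → ℝ)
    (hab : ∀ i, 1 ≤ i → i ≤ n → a i ≤ b i)
    (hba : ∀ i, 1 ≤ i → i < n → b i ≤ a (i + 1))
    (hα : ∀ i j, 1 ≤ i → i < j → j ≤ n → 0 ≤ α i j) :
    ∃ K₀, 1 ≤ K₀ ∧ K₀ < n ∧
      (b n - a 1 - ∑ i ∈ Finset.Icc 1 n, (b i - a i)) *
        (∑ i ∈ Finset.Icc 1 K₀, ∑ j ∈ Finset.Icc (K₀ + 1) n, α i j)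
      ≤ ∑ i ∈ Finset.Icc 1 n, ∑ j ∈ Finset.Icc (i + 1) n, α i j * (a j - b i) := by
  set g : ℕ → ℝ := fun k => a (k+1) - b k with hgdef
  set S : ℕ → ℝ := fun k => ∑ i ∈ Icc 1 k, ∑ j ∈ Icc (k+1) n, α i j with hSdef
  have hgnn : ∀ k, 1 ≤ k → k < n → 0 ≤ g k := by
    intro k h1 h2
    have := hba k h1 h2
    simp only [hgdef]; linarith
  -- choose K₀ minimizing S on Icc 1 (n-1)
  obtain ⟨K₀, hK₀mem, hK₀min⟩ :=
    Finset.exists_min_image (Icc 1 (n-1)) S ⟨1, by simp [Finset.mem_Icc]; omega⟩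
  rw [Finset.mem_Icc] at hK₀mem
  refine ⟨K₀, hK₀mem.1, by omega, ?_⟩
  -- G = sum of gaps
  have hG : b n - a 1 - ∑ i ∈ Icc 1 n, (b i - a i) = ∑ k ∈ Icc 1 (n-1), g k :=
    (tele_aux a b n (by omega)).symm
  have step1 : (b n - a 1 - ∑ i ∈ Icc 1 n, (b i - a i)) * S K₀
      ≤ ∑ k ∈ Icc 1 (n-1), g k * S k := by
    rw [hG, Finset.sum_mul]
    apply Finset.sum_le_sum
    intro k hk
    rw [Finset.mem_Icc] at hk
    exact mul_le_mul_of_nonneg_left (hK₀min k (by rw [Finset.mem_Icc]; omega))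
      (hgnn k hk.1 (by omega))
  -- triple sum rearrangement
  set F : ℕ → ℕ → ℕ → ℝ := fun i j k => if i ≤ k ∧ k < j then g k * α i j else 0 with hF
  have claim1 : ∀ k ∈ Icc 1 (n-1), g k * S k = ∑ i ∈ Icc 1 n, ∑ j ∈ Icc 1 n, F i j k := by
    intro k hk
    rw [Finset.mem_Icc] at hk
    simp only [hSdef, Finset.mul_sum]
    rw [← Finset.sum_subset (Finset.Icc_subset_Icc_right (by omega) :
        Icc 1 k ⊆ Icc 1 n)]
    · apply Finset.sum_congr rfl
      intro i hi
      rw [Finset.mem_Icc] at hi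
      rw [← Finset.sum_subset (Finset.Icc_subset_Icc_left (by omega) :
          Icc (k+1) n ⊆ Icc 1 n)]
      · apply Finset.sum_congr rfl
        intro j hj
        rw [Finset.mem_Icc] at hj
        simp only [hF]
        rw [if_pos ⟨hi.2, by omega⟩]
      · intro j hj hj'
        rw [Finset.mem_Icc] at hj
        simp only [Finset.mem_Icc, not_and, not_le] at hj'
        simp only [hF]
        rw [if_neg]
        rintro ⟨-, h2⟩
        omega
    · intro i hi hi'
      rw [Finset.mem_Icc] at hi
      simp only [Finset.mem_Icc, not_and, not_le] at hi'
      apply Finset.sum_eq_zero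
      intro j hj
      simp only [hF]
      rw [if_neg]
      rintro ⟨h1, -⟩
      omega
  have step2 : ∑ k ∈ Icc 1 (n-1), g k * S k
      = ∑ i ∈ Icc 1 n, ∑ j ∈ Icc 1 n, ∑ k ∈ Icc 1 n, F i j k := by
    rw [Finset.sum_congr rfl claim1]
    rw [Finset.sum_subset (Finset.Icc_subset_Icc_right (by omega) :
        Icc 1 (n-1) ⊆ Icc 1 n)]
    · rw [Finset.sum_comm]
      apply Finset.sum_congr rfl
      intro i _
      rw [Finset.sum_comm]
    · intro k hk hk'
      rw [Finset.mem_Icc] at hk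
      simp only [Finset.mem_Icc, not_and, not_le] at hk'
      apply Finset.sum_eq_zero
      intro i _
      apply Finset.sum_eq_zero
      intro j hj
      rw [Finset.mem_Icc] at hj
      simp only [hF]
      rw [if_neg]
      rintro ⟨-, h2⟩
      omega
  have step3 : ∑ i ∈ Icc 1 n, ∑ j ∈ Icc 1 n, ∑ k ∈ Icc 1 n, F i j k
      ≤ ∑ i ∈ Icc 1 n, ∑ j ∈ Icc (i+1) n, α i j * (a j - b i) := by
    apply Finset.sum_le_sum
    intro i hi
    rw [Finset.mem_Icc] at hi
    rw [← Finset.sum_subset (Finset.Icc_subset_Icc_left (by omega) :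
        Icc (i+1) n ⊆ Icc 1 n)]
    · apply Finset.sum_le_sum
      intro j hj
      rw [Finset.mem_Icc] at hj
      have hfilter : Finset.filter (fun k => i ≤ k ∧ k < j) (Icc 1 n) = Icc i (j-1) := by
        ext k
        simp only [Finset.mem_filter, Finset.mem_Icc]
        omega
      calc ∑ k ∈ Icc 1 n, F i j k
          = ∑ k ∈ Finset.filter (fun k => i ≤ k ∧ k < j) (Icc 1 n), g k * α i j := by
            simp only [hF]
            rw [Finset.sum_filter]
        _ = (∑ k ∈ Icc i (j-1), g k) * α i j := by rw [hfilter, Finset.sum_mul]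
        _ ≤ (a j - b i) * α i j := by
            apply mul_le_mul_of_nonneg_right
            · exact key_aux n a b hab hba i j hi.1 (by omega) hj.2
            · exact hα i j hi.1 (by omega) hj.2
        _ = α i j * (a j - b i) := by ring
    · intro j hj hj'
      rw [Finset.mem_Icc] at hj
      simp only [Finset.mem_Icc, not_and, not_le] at hj'
      apply Finset.sum_eq_zero
      intro k hk
      rw [Finset.mem_Icc] at hk
      simp only [hF]
      rw [if_neg]
      rintro ⟨h1, h2⟩
      omega
  calc (b n - a 1 - ∑ i ∈ Icc 1 n, (b i - a i)) * S K₀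
      ≤ ∑ k ∈ Icc 1 (n-1), g k * S k := step1
    _ = ∑ i ∈ Icc 1 n, ∑ j ∈ Icc 1 n, ∑ k ∈ Icc 1 n, F i j k := step2
    _ ≤ ∑ i ∈ Icc 1 n, ∑ j ∈ Icc (i+1) n, α i j * (a j - b i) := step3
end

section
/- Let $m, N$ be positive integers, let $\{r_k\}$ be a family of positive reals indexed by a finite set of 'collars' each labeled by a pair $(p,q)$ with $1 \leq p < q \leq N$, and let $[e_1,f_1], \ldots, [e_N,f_N]$ be disjoint closed intervals with $e_1 \leq f_1 < e_2 \leq f_2 < \cdots < e_N \leq f_N$. Suppose that for every integer $K$ with $1 \leq K < N$ one has $\sum_{\text{collars labeled } (p,q),\, p \leq K < q} r_k \geq L$ for some fixed $L > 0$. Then $\sum_{\text{all collars } k \text{ labeled } (p,q)} \sqrt{r_k} \cdot (e_q - f_p) \geq \sqrt{L}\left(f_N - e_1 - \sum_{i=1}^N (f_i - e_i)\right)$. -/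
open Finset

private lemma sqrt_add_le_aux {x y : ℝ} (hx : 0 ≤ x) (hy : 0 ≤ y) :
    Real.sqrt (x + y) ≤ Real.sqrt x + Real.sqrt y := by
  have h : Real.sqrt (x + y) ≤ Real.sqrt ((Real.sqrt x + Real.sqrt y) ^ 2) := by
    apply Real.sqrt_le_sqrt
    nlinarith [Real.sq_sqrt hx, Real.sq_sqrt hy, Real.sqrt_nonneg x, Real.sqrt_nonneg y]
  rwa [Real.sqrt_sq (by positivity)] at h

private lemma sqrt_sum_le_sum_sqrt {ι : Type*} (s : Finset ι) (r : ι → ℝ)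
    (h : ∀ k ∈ s, 0 ≤ r k) :
    Real.sqrt (∑ k ∈ s, r k) ≤ ∑ k ∈ s, Real.sqrt (r k) := by
  induction s using Finset.cons_induction with
  | empty => simp
  | cons a s ha ih =>
    rw [Finset.sum_cons, Finset.sum_cons]
    refine le_trans (sqrt_add_le_aux (h a (Finset.mem_cons_self a s))
      (Finset.sum_nonneg fun k hk => h k (Finset.mem_cons_of_mem hk))) ?_
    exact add_le_add_right (ih fun k hk => h k (Finset.mem_cons_of_mem hk)) _

/-- telescoping: for a ≤ b, ∑_{c ∈ Icc a (b-1)} (e (c+1) - f c) ≤ e b - f a given e i ≤ f i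
for interior i. We prove a general version by induction. -/
private lemma telescope_le (e f : ℕ → ℝ) (a : ℕ) :
    ∀ b, a < b → (∀ i, a < i → i < b → e i ≤ f i) →
    (∑ c ∈ Finset.Icc a (b - 1), (e (c + 1) - f c)) ≤ e b - f a := by
  intro b
  induction b with
  | zero => omega
  | succ b ih =>
    intro hab hint
    rcases Nat.lt_or_ge a b with hab' | hab'
    · have hb1 : 1 ≤ b := by omega
      have : Finset.Icc a (b + 1 - 1) = insert b (Finset.Icc a (b - 1)) := by
        rw [Nat.add_sub_cancel]
        ext x
        simp only [Finset.mem_insert, Finset.mem_Icc]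
        omega
      rw [this, Finset.sum_insert (by simp; omega)]
      have h1 := ih hab' (fun i h1 h2 => hint i h1 (by omega))
      have h2 : e b ≤ f b := hint b hab' (by omega)
      linarith
    · have hab'' : a = b := by omega
      subst hab''
      rw [Nat.add_sub_cancel, Finset.Icc_self, Finset.sum_singleton]

/-- Abstract form of the 'linear method' (Proposition 4.2). Collars `k ∈ ι` are labeled
by pairs `(p k, q k)` with `1 ≤ p k < q k ≤ N`, carry positive weights `r k`, and
`[e₁,f₁], …, [e_N,f_N]` are disjoint ordered closed intervals. If for every cut
`1 ≤ K < N` the total weight of collars crossing the cut is at least `L > 0`, then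
`∑_k √(r k) (e_{q k} - f_{p k}) ≥ √L (f_N - e₁ - ∑ᵢ (fᵢ - eᵢ))`. -/
theorem linear_method {ι : Type*} [DecidableEq ι] (K : Finset ι) (N : ℕ) (hN : 1 ≤ N)
    (p q : ι → ℕ) (r : ι → ℝ) (e f : ℕ → ℝ) (L : ℝ) (hL : 0 < L)
    (hpq : ∀ k ∈ K, 1 ≤ p k ∧ p k < q k ∧ q k ≤ N)
    (hr : ∀ k ∈ K, 0 < r k)
    (hef : ∀ i, 1 ≤ i → i ≤ N → e i ≤ f i)
    (hfe : ∀ i, 1 ≤ i → i < N → f i < e (i + 1))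
    (hcut : ∀ c, 1 ≤ c → c < N →
      L ≤ ∑ k ∈ K.filter (fun k => p k ≤ c ∧ c < q k), r k) :
    Real.sqrt L * (f N - e 1 - ∑ i ∈ Finset.Icc 1 N, (f i - e i)) ≤
      ∑ k ∈ K, Real.sqrt (r k) * (e (q k) - f (p k)) := by
  -- gap function
  set g : ℕ → ℝ := fun c => e (c + 1) - f c with hg
  -- Step 1: f N - e 1 - ∑ (f i - e i) = ∑_{c=1}^{N-1} g c
  have hstep1 : f N - e 1 - ∑ i ∈ Finset.Icc 1 N, (f i - e i)
      = ∑ c ∈ Finset.Icc 1 (N - 1), g c := by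
    clear hcut hfe hef hpq hr
    induction N with
    | zero => omega
    | succ n ih =>
      rcases Nat.lt_or_ge 0 n with hn | hn
      · have h1 : Finset.Icc 1 (n + 1) = insert (n + 1) (Finset.Icc 1 n) := by
          ext x; simp only [Finset.mem_insert, Finset.mem_Icc]; omega
        have h2 : Finset.Icc 1 (n + 1 - 1) = insert n (Finset.Icc 1 (n - 1)) := by
          ext x; simp only [Finset.mem_insert, Finset.mem_Icc]; omega
        rw [h1, Finset.sum_insert (by simp), h2, Finset.sum_insert (by simp; omega),
          ← ih (by omega)]
        simp [hg]; ring
      · interval_cases n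
        simp [hg]
  rw [hstep1]
  -- Step 2: √L * ∑ g ≤ ∑_c (∑_{k crossing c} √(r k)) * g c
  rw [Finset.mul_sum]
  have hgpos : ∀ c ∈ Finset.Icc 1 (N - 1), 0 ≤ g c := by
    intro c hc
    simp only [Finset.mem_Icc] at hc
    exact le_of_lt (sub_pos.mpr (hfe c hc.1 (by omega)))
  have hstep2 : ∀ c ∈ Finset.Icc 1 (N - 1),
      Real.sqrt L * g c ≤
        (∑ k ∈ K.filter (fun k => p k ≤ c ∧ c < q k), Real.sqrt (r k)) * g c := by
    intro c hc
    simp only [Finset.mem_Icc] at hc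
    apply mul_le_mul_of_nonneg_right _ (hgpos c (by simp [Finset.mem_Icc]; omega))
    refine le_trans (Real.sqrt_le_sqrt (hcut c hc.1 (by omega))) ?_
    exact sqrt_sum_le_sum_sqrt _ _ fun k hk => le_of_lt (hr k (Finset.mem_filter.mp hk).1)
  refine le_trans (Finset.sum_le_sum hstep2) ?_
  -- Step 3: swap sums
  have hswap : ∑ c ∈ Finset.Icc 1 (N - 1),
      (∑ k ∈ K.filter (fun k => p k ≤ c ∧ c < q k), Real.sqrt (r k)) * g c
      = ∑ k ∈ K, Real.sqrt (r k) * ∑ c ∈ (Finset.Icc 1 (N - 1)).filter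
          (fun c => p k ≤ c ∧ c < q k), g c := by
    simp_rw [Finset.sum_mul, Finset.mul_sum, Finset.sum_filter]
    rw [Finset.sum_comm]
  rw [hswap]
  -- Step 4: per-collar telescoping
  apply Finset.sum_le_sum
  intro k hk
  obtain ⟨hp1, hpq', hqN⟩ := hpq k hk
  apply mul_le_mul_of_nonneg_left _ (Real.sqrt_nonneg _)
  have hfilter : (Finset.Icc 1 (N - 1)).filter (fun c => p k ≤ c ∧ c < q k)
      = Finset.Icc (p k) (q k - 1) := by
    ext x
    simp only [Finset.mem_filter, Finset.mem_Icc]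
    omega
  rw [hfilter]
  exact telescope_le e f (p k) (q k) hpq'
    (fun i h1 h2 => hef i (by omega) (by omega))
end
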